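/- Let d > 1 be odd. Let M₅ be the square matrix indexed by F_{2^d}^* whose (u,v) entry is the number of x ∈ F_{2^d}^* with v·u⁻¹ = x^5 + x^4, and let N₅ be the matrix obtained from M₅ by replacing every nonzero entry with 1. Then the rank over F₂ of N₅ equals the rank over F₂ of M₅ (i.e., of the reduction of M₅ modulo 2). -/

import Mathlib

/-- The rank of a (finite) square matrix over a commutative ring `K`. -/
noncomputable def matRank (K : Type*) [CommRing K] {ι : Type*} [Finite ι]
    (M : Matrix ι ι K) : ℕ :=
  letI : Fintype ι := Fintype.ofFinite ι
  M.rank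

/-- The `(u,v)` entry of the circulant matrix `M_k`: the number of `x ∈ F_{2^d}ˣ` with
`v * u⁻¹ = x^k + x^{k-1}`. -/
noncomputable def Mmat (k d : ℕ) (u v : (GaloisField 2 d)ˣ) : ℕ :=
  Nat.card {x : (GaloisField 2 d)ˣ //
    (x : GaloisField 2 d) ^ k + (x : GaloisField 2 d) ^ (k - 1) =
      ((v * u⁻¹ : (GaloisField 2 d)ˣ) : GaloisField 2 d)}

namespace Stmt17Aux

/-- Artin–Schreier solvability predicate. -/
def AS (F : Type*) [Field F] (a : F) : Prop := ∃ t : F, t ^ 2 + t = a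

variable {F : Type*} [Field F]

lemma add_ne (h2 : (2 : F) = 0) {a b : F} (h : a ≠ b) : a + b ≠ 0 := by
  intro hab
  exact h (by linear_combination hab - b * h2)

lemma eq_of_sq (h2 : (2 : F) = 0) {a b : F} (h : a ^ 2 = b ^ 2) : a = b := by
  have h0 : (a + b) ^ 2 = 0 := by linear_combination h + (a * b + b ^ 2) * h2
  have hab : a + b = 0 := (pow_eq_zero_iff (two_ne_zero)).mp h0
  linear_combination hab - b * h2

lemma exists_sqrt [Finite F] (h2 : (2 : F) = 0) (a : F) : ∃ b : F, b ^ 2 = a := by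
  have hinj : Function.Injective (fun x : F => x ^ 2) := fun x y h => eq_of_sq h2 h
  exact (Finite.injective_iff_surjective.mp hinj) a

lemma not_AS_one [Fintype F] [DecidableEq F] (h2 : (2 : F) = 0)
    (hcard : ¬ (3 ∣ Fintype.card F - 1)) : ¬ AS F 1 := by
  rintro ⟨t, ht⟩
  have ht0 : t ≠ 0 := by rintro rfl; simp at ht
  have ht1 : t ≠ 1 := by
    rintro rfl
    exact one_ne_zero (α := F) (by linear_combination h2 - ht)
  have ht3 : t ^ 3 = 1 := by linear_combination (t + 1) * ht - t ^ 2 * h2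
  let tu : Fˣ := Units.mk0 t ht0
  have htu3 : tu ^ 3 = 1 := by
    apply Units.ext
    push_cast [tu]
    simpa using ht3
  have htu1 : tu ≠ 1 := by
    intro h
    exact ht1 (by simpa [tu] using congrArg Units.val h)
  haveI : Fact (Nat.Prime 3) := ⟨by norm_num⟩
  have ho : orderOf tu = 3 := orderOf_eq_prime htu3 htu1
  have hdvd := orderOf_dvd_card (x := tu)
  rw [ho, Fintype.card_units] at hdvd
  exact hcard hdvd

lemma exists_cube [Fintype F] [DecidableEq F] (h2 : (2 : F) = 0) (hAS1 : ¬ AS F 1)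
    {k : F} (hk : k ≠ 0) (hASk : AS F k⁻¹) : ∃ n : F, n ^ 3 + n = k := by
  classical
  set T : Finset F := Finset.univ.filter (fun z => z ≠ 0 ∧ AS F z⁻¹) with hT
  have hmem : ∀ z : F, z ∈ T ↔ (z ≠ 0 ∧ AS F z⁻¹) := by intro z; simp [hT]
  have hmap : ∀ z ∈ T, z ^ 3 + z ∈ T := by
    intro z hz
    obtain ⟨hz0, t, ht⟩ := (hmem z).mp hz
    have hz1 : z ≠ 1 := by
      rintro rfl
      exact hAS1 ⟨t, by simpa using ht⟩
    have hzp1 : z + 1 ≠ 0 := add_ne h2 hz1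
    have hfac : z ^ 3 + z = z * (z + 1) ^ 2 := by linear_combination (-z^2) * h2
    have h30 : z ^ 3 + z ≠ 0 := by
      rw [hfac]; exact mul_ne_zero hz0 (pow_ne_zero 2 hzp1)
    refine (hmem _).mpr ⟨h30, ?_⟩
    have hiz : z * z⁻¹ = 1 := mul_inv_cancel₀ hz0
    have hiw : (z + 1) * (z + 1)⁻¹ = 1 := mul_inv_cancel₀ hzp1
    have hone : (z ^ 3 + z) * ((t + (z + 1)⁻¹) ^ 2 + (t + (z + 1)⁻¹)) = 1 := by
      linear_combination (z^2 + 1) * hiz + ((z+1)⁻¹ * z^2 + (z+1)⁻¹ * z + z^2) * hiw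
        + (z^3 + z) * ht
        + (t * (z+1)⁻¹ * z^3 + t * (z+1)⁻¹ * z - ((z+1)⁻¹)^2 * z^2 + (z+1)⁻¹ * z + z^2) * h2
    exact ⟨t + (z + 1)⁻¹, (inv_eq_of_mul_eq_one_right hone).symm⟩
  have hinj : ∀ a ∈ T, ∀ b ∈ T, a ^ 3 + a = b ^ 3 + b → a = b := by
    intro a ha b hb h
    by_contra hne
    obtain ⟨ha0, t, ht⟩ := (hmem a).mp ha
    have hab : a + b ≠ 0 := add_ne h2 hne
    have hfact : (a + b) * (a ^ 2 + a * b + b ^ 2 + 1) = 0 := by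
      linear_combination h + (b^3 + b + a^2*b + a*b^2) * h2
    have hrel : a ^ 2 + a * b + b ^ 2 + 1 = 0 := by
      rcases mul_eq_zero.mp hfact with h' | h'
      · exact absurd h' hab
      · exact h'
    have ha' : a * a⁻¹ = 1 := mul_inv_cancel₀ ha0
    refine hAS1 ⟨b * a⁻¹ + t ^ 2, ?_⟩
    linear_combination (t^2 + t + a⁻¹) * ht + (a⁻¹)^2 * hrel + (b * a⁻¹ + a * a⁻¹ + 1) * ha'
      + (-t^3 + t^2 * b * a⁻¹ - b * a * (a⁻¹)^2 + b * a⁻¹ - a^2 * (a⁻¹)^2) * h2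
  have hkT : k ∈ T := (hmem k).mpr ⟨hk, hASk⟩
  obtain ⟨n, hn, heq⟩ := Finset.surj_on_of_inj_on_of_card_le (s := T) (t := T)
    (fun z _ => z ^ 3 + z) (fun a ha => hmap a ha)
    (fun a b ha hb h => hinj a ha b hb h) le_rfl k hkT
  exact ⟨n, heq.symm⟩

lemma pair_facts (h2 : (2 : F) = 0) {c u v : F}
    (hu : u ^ 5 + u = c) (hv : v ^ 5 + v = c) (huv : u ≠ v) :
    (u+v)^4 + (u+v)^2*(u*v) + (u*v)^2 = 1 ∧ c = (u*v)*(u+v)^3 := by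
  have hs0 : u + v ≠ 0 := add_ne h2 huv
  have hR' : (u+v) * ((u+v)^4 + (u+v)^2*(u*v) + (u*v)^2) = (u+v) * 1 := by
    linear_combination hu + hv + (3*u^4*v + 7*u^3*v^2 + 7*u^2*v^3 + 3*u*v^4 - u - v + c) * h2
  have hR := mul_left_cancel₀ hs0 hR'
  refine ⟨hR, ?_⟩
  linear_combination hv + v * hR + (-(u^4*v) - 4*u^3*v^2 - 6*u^2*v^3 - 3*u*v^4 - v^5 + c) * h2

lemma third_root [Fintype F] [DecidableEq F] (h2 : (2 : F) = 0) (hAS1 : ¬ AS F 1)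
    {c u v : F} (hc : c ≠ 0) (hu : u ^ 5 + u = c) (hv : v ^ 5 + v = c) (huv : u ≠ v) :
    ∃ w : F, w ^ 5 + w = c ∧ w ≠ u ∧ w ≠ v := by
  have hs0 : u + v ≠ 0 := add_ne h2 huv
  have hu0 : u ≠ 0 := by rintro rfl; exact hc (by linear_combination -hu)
  have hv0 : v ≠ 0 := by rintro rfl; exact hc (by linear_combination -hv)
  have hu1 : u ≠ 1 := by rintro rfl; exact hc (by linear_combination -hu + h2)
  have hv1 : v ≠ 1 := by rintro rfl; exact hc (by linear_combination -hv + h2)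
  obtain ⟨hR, hps⟩ := pair_facts h2 hu hv huv
  have hp0 : u * v ≠ 0 := mul_ne_zero hu0 hv0
  set k : F := (u+v)^2 * (u*v)⁻¹ with hk
  have hk0 : k ≠ 0 := mul_ne_zero (pow_ne_zero 2 hs0) (inv_ne_zero hp0)
  have hkuv : (u*v) * k = (u+v)^2 := by rw [hk]; field_simp
  have h1 : (u+v) * (u * (u+v)⁻¹) = u := by field_simp
  have h4 : (u+v)^2 * ((u*(u+v)⁻¹)^2 + (u*(u+v)⁻¹)) = u*v := by
    linear_combination ((u+v)*(u*(u+v)⁻¹) + u + (u+v)) * h1 + u^2 * h2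
  have hone : k * ((u*(u+v)⁻¹)^2 + (u*(u+v)⁻¹)) = 1 := by
    have hstep : k * ((u*(u+v)⁻¹)^2 + (u*(u+v)⁻¹))
        = (u*v)⁻¹ * ((u+v)^2 * ((u*(u+v)⁻¹)^2 + (u*(u+v)⁻¹))) := by rw [hk]; ring
    rw [hstep, h4, inv_mul_cancel₀ hp0]
  have hASk : AS F k⁻¹ := ⟨_, (inv_eq_of_mul_eq_one_right hone).symm⟩
  obtain ⟨n, hn⟩ := exists_cube h2 hAS1 hk0 hASk
  obtain ⟨m, hm⟩ := exists_sqrt h2 n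
  obtain ⟨π, hπ⟩ := exists_sqrt h2 (u*v)
  have hπ0 : π ≠ 0 := by
    intro h; apply hp0; rw [← hπ, h]; ring
  have hkey2 : (π*(m^3+m))^2 = (u+v)^2 := by
    linear_combination (m^6 + m^2) * hπ + (m^4*(u*v) + m^2*n*(u*v) + n^2*(u*v) + (u*v)) * hm
      + (u*v) * hn + hkuv + (m^4*π^2) * h2
  have hkey : π*(m^3+m) = u+v := eq_of_sq h2 hkey2
  have hy : (π*m)^3 + (u*v)*(π*m) + (u*v)*(u+v) = 0 := by
    linear_combination (m^3*π) * hπ + (u*v) * hkey + (u^2*v + u*v^2) * h2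
  refine ⟨(u+v) + π*m, ?_, ?_, ?_⟩
  · linear_combination ((π*m)^2 + (π*m)*(u+v) + (u*v)) * hy + ((π*m) + (u+v)) * hR + hps
      + (2*(π*m)^4*(u+v) - (π*m)^3*(u*v) + 5*(π*m)^3*(u+v)^2 - (π*m)^2*(u*v)*(u+v)
        + 5*(π*m)^2*(u+v)^3 - (π*m)*(u*v)^2 - (π*m)*(u*v)*(u+v)^2 + 2*(π*m)*(u+v)^4
        + (π*m) - (u*v)^2*(u+v) + (u+v) - c) * h2
  · intro hwu
    have hgu4 : (u+v) * (u^3 + (u+v)*u^2 + ((u+v)^2 + (u*v))*u + (u+v)^3) = (u+1)^4 := by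
      linear_combination hR + (u^4 + 3*u^3*v - 2*u^3 + u^2*v^2 - 3*u^2 - 2*u) * h2
    have hgw : ((u+v) + π*m)^3 + (u+v)*((u+v) + π*m)^2 + ((u+v)^2 + (u*v))*((u+v) + π*m)
        + (u+v)^3 = 0 := by
      linear_combination hy + (2*(π*m)^2*(u+v) + 3*(π*m)*(u+v)^2 + 2*(u+v)^3) * h2
    rw [hwu] at hgw
    have h40 : (u+1)^4 = 0 := by rw [← hgu4, hgw, mul_zero]
    have hu10 : u + 1 = 0 := (pow_eq_zero_iff (by norm_num)).mp h40
    exact hu1 (by linear_combination hu10 - h2)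
  · intro hwv
    have hgv4 : (u+v) * (v^3 + (u+v)*v^2 + ((u+v)^2 + (u*v))*v + (u+v)^3) = (v+1)^4 := by
      linear_combination hR + (u^2*v^2 + 3*u*v^3 + v^4 - 2*v^3 - 3*v^2 - 2*v) * h2
    have hgw : ((u+v) + π*m)^3 + (u+v)*((u+v) + π*m)^2 + ((u+v)^2 + (u*v))*((u+v) + π*m)
        + (u+v)^3 = 0 := by
      linear_combination hy + (2*(π*m)^2*(u+v) + 3*(π*m)*(u+v)^2 + 2*(u+v)^3) * h2
    rw [hwv] at hgw
    have h40 : (v+1)^4 = 0 := by rw [← hgv4, hgw, mul_zero]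
    have hv10 : v + 1 = 0 := (pow_eq_zero_iff (by norm_num)).mp h40
    exact hv1 (by linear_combination hv10 - h2)

lemma sum_root_contra (h2 : (2 : F) = 0) {c u v x : F} (hc : c ≠ 0)
    (hu : u ^ 5 + u = c) (hv : v ^ 5 + v = c) (hx : x ^ 5 + x = c)
    (huv : u ≠ v) (hxs : x = u + v) : False := by
  subst hxs
  have hs0 : u + v ≠ 0 := add_ne h2 huv
  obtain ⟨hR, hps⟩ := pair_facts h2 hu hv huv
  have hpx' : (u+v) * ((u*v)*(u+v)^2) = (u+v) * (((u+v)+1)^4) := by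
    linear_combination (-1) * hps - hx + (-2*(u+v)^4 - 3*(u+v)^3 - 2*(u+v)^2) * h2
  have hpx := mul_left_cancel₀ hs0 hpx'
  have h8 : ((u+v)+1)^8 = 0 := by
    linear_combination ((u*v)*(u+v)^2 + 2*(u+v)^4 + 4*(u+v)^3 + 6*(u+v)^2 + 4*(u+v) + 1) * hpx
      + (u+v)^4 * hR
      + (-(u*v)^2*(u+v)^4 - (u*v)*(u+v)^6 + (u+v)^8 + 10*(u+v)^7 + 31*(u+v)^6 + 58*(u+v)^5
        + 71*(u+v)^4 + 56*(u+v)^3 + 28*(u+v)^2 + 8*(u+v) + 1) * h2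
  have h10 : (u+v) + 1 = 0 := (pow_eq_zero_iff (by norm_num)).mp h8
  have h11 : u + v = 1 := by linear_combination h10 - h2
  rw [h11] at hx
  exact hc (by linear_combination -hx + h2)

lemma count_parity [Fintype F] [DecidableEq F] (h2 : (2 : F) = 0) (hAS1 : ¬ AS F 1)
    (c : F) (hc : c ≠ 0) :
    (Finset.univ.filter (fun z : F => z ^ 5 + z = c)).card = 0 ∨
      Odd (Finset.univ.filter (fun z : F => z ^ 5 + z = c)).card := by
  classical
  set B := Finset.univ.filter (fun z : F => z ^ 5 + z = c) with hB
  have hmemB : ∀ z : F, z ∈ B ↔ z ^ 5 + z = c := by intro z; simp [hB]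
  have hBle : B.card ≤ 5 := by
    have hcoeff : (Polynomial.X^5 + Polynomial.X - Polynomial.C c : Polynomial F).coeff 5 = 1 := by
      simp [Polynomial.coeff_X, Polynomial.coeff_C]
    have hfne : (Polynomial.X^5 + Polynomial.X - Polynomial.C c : Polynomial F) ≠ 0 := by
      intro h
      rw [h] at hcoeff
      simp at hcoeff
    have hdeg : (Polynomial.X^5 + Polynomial.X - Polynomial.C c : Polynomial F).natDegree ≤ 5 := by
      compute_degree
    have hsub : B ⊆ (Polynomial.X^5 + Polynomial.X - Polynomial.C c : Polynomial F).roots.toFinset := by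
      intro z hz
      rw [Multiset.mem_toFinset, Polynomial.mem_roots hfne]
      have hz' := (hmemB z).mp hz
      simp only [Polynomial.IsRoot, Polynomial.eval_sub, Polynomial.eval_add,
        Polynomial.eval_pow, Polynomial.eval_X, Polynomial.eval_C]
      rw [hz']
      ring
    calc B.card ≤ _ := Finset.card_le_card hsub
      _ ≤ _ := Multiset.toFinset_card_le _
      _ ≤ _ := Polynomial.card_roots' _
      _ ≤ 5 := hdeg
  rcases Nat.even_or_odd B.card with he | ho
  · left
    by_contra hne0
    have h24 : B.card = 2 ∨ B.card = 4 := by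
      obtain ⟨r, hr⟩ := he
      omega
    rcases h24 with h2' | h4'
    · obtain ⟨u, v, huv, hBuv⟩ := Finset.card_eq_two.mp h2'
      have hu : u ^ 5 + u = c := (hmemB u).mp (by rw [hBuv]; simp)
      have hv : v ^ 5 + v = c := (hmemB v).mp (by rw [hBuv]; simp)
      obtain ⟨w, hw, hwu, hwv⟩ := third_root h2 hAS1 hc hu hv huv
      have hwB : w ∈ B := (hmemB w).mpr hw
      rw [hBuv] at hwB
      simp only [Finset.mem_insert, Finset.mem_singleton] at hwB
      rcases hwB with h' | h'
      · exact hwu h'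
      · exact hwv h'
    · have hne : B.Nonempty := Finset.card_pos.mp (by omega)
      obtain ⟨u, huB⟩ := hne
      have h3 : (B.erase u).card = 3 := by
        rw [Finset.card_erase_of_mem huB]; omega
      obtain ⟨v, w, x, hvw, hvx, hwx, hErase⟩ := Finset.card_eq_three.mp h3
      have hvE : v ∈ B.erase u := by rw [hErase]; simp
      have hwE : w ∈ B.erase u := by rw [hErase]; simp
      have hxE : x ∈ B.erase u := by rw [hErase]; simp
      have hvu : v ≠ u := (Finset.mem_erase.mp hvE).1
      have hwu : w ≠ u := (Finset.mem_erase.mp hwE).1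
      have hxu : x ≠ u := (Finset.mem_erase.mp hxE).1
      have hu : u ^ 5 + u = c := (hmemB u).mp huB
      have hv : v ^ 5 + v = c := (hmemB v).mp (Finset.mem_of_mem_erase hvE)
      have hw : w ^ 5 + w = c := (hmemB w).mp (Finset.mem_of_mem_erase hwE)
      have hx : x ^ 5 + x = c := (hmemB x).mp (Finset.mem_of_mem_erase hxE)
      have huv : u ≠ v := fun h => hvu h.symm
      obtain ⟨hR, hps⟩ := pair_facts h2 hu hv huv
      -- g1(w) = 0
      have hq_w : (w^2 + (u+v)*w + (u*v)) * (w^3 + (u+v)*w^2 + ((u+v)^2 + (u*v))*w + (u+v)^3)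
          = 0 := by
        linear_combination hw + w * hR + hps
          + (w^4*(u+v) + w^3*(u*v) + w^3*(u+v)^2 + w^2*(u*v)*(u+v) + w^2*(u+v)^3
            + (u*v)*(u+v)^3) * h2
      have hg1w : w^3 + (u+v)*w^2 + ((u+v)^2 + (u*v))*w + (u+v)^3 = 0 := by
        have hne' : w^2 + (u+v)*w + (u*v) ≠ 0 := by
          have hfac : w^2 + (u+v)*w + (u*v) = (w+u)*(w+v) := by ring
          rw [hfac]
          exact mul_ne_zero (add_ne h2 hwu) (add_ne h2 (fun h => hvw h.symm))
        rcases mul_eq_zero.mp hq_w with h' | h'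
        · exact absurd h' hne'
        · exact h'
      have hq_x : (x^2 + (u+v)*x + (u*v)) * (x^3 + (u+v)*x^2 + ((u+v)^2 + (u*v))*x + (u+v)^3)
          = 0 := by
        linear_combination hx + x * hR + hps
          + (x^4*(u+v) + x^3*(u*v) + x^3*(u+v)^2 + x^2*(u*v)*(u+v) + x^2*(u+v)^3
            + (u*v)*(u+v)^3) * h2
      have hg1x : x^3 + (u+v)*x^2 + ((u+v)^2 + (u*v))*x + (u+v)^3 = 0 := by
        have hne' : x^2 + (u+v)*x + (u*v) ≠ 0 := by
          have hfac : x^2 + (u+v)*x + (u*v) = (x+u)*(x+v) := by ring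
          rw [hfac]
          exact mul_ne_zero (add_ne h2 hxu) (add_ne h2 (fun h => hvx h.symm))
        rcases mul_eq_zero.mp hq_x with h' | h'
        · exact absurd h' hne'
        · exact h'
      -- conjugate root e = u+v+w+x
      have hge' : (w+x) * ((u+v+w+x)^3 + (u+v)*(u+v+w+x)^2 + ((u+v)^2 + (u*v))*(u+v+w+x)
          + (u+v)^3) = 0 := by
        linear_combination (-((u+v+w+x)+x)) * hg1w + (-((u+v+w+x)+w)) * hg1x
          + (w^4 + 3*w^3*x + 3*w^3*(u+v) + 3*w^2*x^2 + 7*w^2*x*(u+v) + w^2*(u*v)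
            + 4*w^2*(u+v)^2 + 3*w*x^3 + 7*w*x^2*(u+v) + 3*w*x*(u*v) + 8*w*x*(u+v)^2
            + w*(u*v)*(u+v) + 4*w*(u+v)^3 + x^4 + 3*x^3*(u+v) + x^2*(u*v) + 4*x^2*(u+v)^2
            + x*(u*v)*(u+v) + 4*x*(u+v)^3 + (u+v)^4) * h2
      have hg1e : (u+v+w+x)^3 + (u+v)*(u+v+w+x)^2 + ((u+v)^2 + (u*v))*(u+v+w+x)
          + (u+v)^3 = 0 := by
        rcases mul_eq_zero.mp hge' with h' | h'
        · exact absurd h' (add_ne h2 hwx)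
        · exact h'
      have he_root : (u+v+w+x)^5 + (u+v+w+x) = c := by
        linear_combination ((u+v+w+x)^2 + (u+v)*(u+v+w+x) + (u*v)) * hg1e
          + (-(u+v+w+x)) * hR + (-1) * hps
          + (-((u+v+w+x)^4*(u+v) + (u+v+w+x)^3*(u*v) + (u+v+w+x)^3*(u+v)^2
            + (u+v+w+x)^2*(u*v)*(u+v) + (u+v+w+x)^2*(u+v)^3 + (u*v)*(u+v)^3)) * h2
      have heB : (u+v+w+x) ∈ B := (hmemB _).mpr he_root
      have hBeq : B = insert u {v, w, x} := by
        rw [← Finset.insert_erase huB, hErase]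
      rw [hBeq] at heB
      simp only [Finset.mem_insert, Finset.mem_singleton] at heB
      rcases heB with h' | h' | h' | h'
      · have hsum : v = w + x := by linear_combination (-1) * h' + v * h2
        exact sum_root_contra h2 hc hw hx hv hwx hsum
      · have hsum : u = w + x := by linear_combination (-1) * h' + u * h2
        exact sum_root_contra h2 hc hw hx hu hwx hsum
      · have hsum : x = u + v := by linear_combination (-1) * h' + x * h2
        exact sum_root_contra h2 hc hu hv hx huv hsum
      · have hsum : w = u + v := by linear_combination (-1) * h' + w * h2
        exact sum_root_contra h2 hc hu hv hw huv hsum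
  · exact Or.inr ho

end Stmt17Aux

open Stmt17Aux in
/-- For odd `d > 1`, the 0-1 matrix `N₅` obtained from `M₅` by replacing each nonzero
entry with 1 has the same rank over `F₂` as `M₅` (reduced mod 2). -/
theorem stmt_17 (d : ℕ) (hd : 1 < d) (hodd : Odd d) :
    matRank (ZMod 2)
      (Matrix.of fun u v : (GaloisField 2 d)ˣ =>
        if Mmat 5 d u v ≠ 0 then (1 : ZMod 2) else 0) =
    matRank (ZMod 2)
      (Matrix.of fun u v : (GaloisField 2 d)ˣ => (Mmat 5 d u v : ZMod 2)) := by
  classical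
  have h2 : (2 : GaloisField 2 d) = 0 := by
    have := CharP.cast_eq_zero (GaloisField 2 d) 2
    exact_mod_cast this
  haveI : Fintype (GaloisField 2 d) := Fintype.ofFinite _
  have hcard : Fintype.card (GaloisField 2 d) = 2 ^ d := by
    rw [← Nat.card_eq_fintype_card]
    exact GaloisField.card 2 d (by omega)
  have h3 : ¬ (3 ∣ Fintype.card (GaloisField 2 d) - 1) := by
    rw [hcard]
    intro hdvd
    obtain ⟨t, ht⟩ := hdvd
    have h1le : 1 ≤ 2 ^ d := Nat.one_le_two_pow
    have h' : (2 : ℕ) ^ d = 3 * t + 1 := by omega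
    have hcast := congrArg (fun n : ℕ => (n : ZMod 3)) h'
    push_cast at hcast
    rw [show ((3 : ZMod 3)) = 0 by decide] at hcast
    rw [show ((2 : ZMod 3)) = -1 by decide] at hcast
    rw [hodd.neg_one_pow] at hcast
    simp at hcast
    exact absurd hcast (by decide)
  have hAS1 := not_AS_one h2 h3
  have entry : ∀ u v : (GaloisField 2 d)ˣ,
      ((Mmat 5 d u v : ZMod 2)) = (if Mmat 5 d u v ≠ 0 then (1 : ZMod 2) else 0) := by
    intro u v
    set c : GaloisField 2 d := ((v * u⁻¹ : (GaloisField 2 d)ˣ) : GaloisField 2 d) with hc'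
    have hc : c ≠ 0 := Units.ne_zero _
    have e1 : {x : (GaloisField 2 d)ˣ //
          (x : GaloisField 2 d) ^ 5 + (x : GaloisField 2 d) ^ 4 = c}
        ≃ {z : GaloisField 2 d // z ^ 5 + z ^ 4 = c} :=
      { toFun := fun x => ⟨(x.1 : GaloisField 2 d), x.2⟩
        invFun := fun z => ⟨Units.mk0 z.1 (fun h => hc (by rw [← z.2, h]; ring)), z.2⟩
        left_inv := fun x => Subtype.ext (Units.ext rfl)
        right_inv := fun z => Subtype.ext rfl }
    have hMval : Mmat 5 d u v
        = (Finset.univ.filter (fun z : GaloisField 2 d => z ^ 5 + z = c)).card := by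
      have step1 : Mmat 5 d u v
          = (Finset.univ.filter (fun z : GaloisField 2 d => z ^ 5 + z ^ 4 = c)).card := by
        unfold Mmat
        rw [show (5 - 1 : ℕ) = 4 from rfl]
        rw [Nat.card_congr e1, Nat.card_eq_fintype_card]
        exact Fintype.card_subtype _
      rw [step1]
      apply Finset.card_nbij' (fun z => z + 1) (fun z => z + 1)
      · intro a ha
        simp only [Finset.mem_coe] at ha ⊢
        rw [Finset.mem_filter] at ha ⊢
        refine ⟨Finset.mem_univ _, ?_⟩
        linear_combination ha.2 + (2*a^4 + 5*a^3 + 5*a^2 + 3*a + 1) * h2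
      · intro b hb
        simp only [Finset.mem_coe] at hb ⊢
        rw [Finset.mem_filter] at hb ⊢
        refine ⟨Finset.mem_univ _, ?_⟩
        linear_combination hb.2 + (3*b^4 + 7*b^3 + 8*b^2 + 4*b + 1) * h2
      · intro a _
        linear_combination h2
      · intro b _
        linear_combination h2
    rw [hMval]
    rcases count_parity h2 hAS1 c hc with h0 | hoddc
    · rw [h0]; simp
    · obtain ⟨r, hr⟩ := hoddc
      rw [hr]
      have hne : (2 * r + 1 : ℕ) ≠ 0 := by omega
      rw [if_pos hne]
      push_cast
      rw [show ((2 : ZMod 2)) = 0 by decide]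
      ring
  have hmat : (Matrix.of fun u v : (GaloisField 2 d)ˣ =>
      if Mmat 5 d u v ≠ 0 then (1 : ZMod 2) else 0)
      = (Matrix.of fun u v : (GaloisField 2 d)ˣ => (Mmat 5 d u v : ZMod 2)) := by
    ext u v
    simp only [Matrix.of_apply]
    exact (entry u v).symm
  rw [hmat]
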